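/- Let Σ₀ be a d×d real symmetric positive definite matrix, let Σ₁, …, Σ_N be d×d real symmetric positive definite matrices, and let w₁, …, w_N be nonnegative reals with ∑_{i=1}^N wᵢ = 1. Set T̄ := ∑_{i=1}^N wᵢ T_{Σ₀→Σᵢ}. Then (λ_max(T̄ Σ₀ T̄))^{1/2} ≤ ∑_{i=1}^N wᵢ (λ_max(Σᵢ))^{1/2}, where λ_max denotes the largest eigenvalue. (This expresses that √λ_max is convex along generalized geodesics of the Bures–Wasserstein geometry.) -/

import Mathlib

open Matrix
open scoped Classical

/-- Symmetric PSD square root of a positive semidefinite matrix (junk value `0` otherwise). -/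
noncomputable def msqrt {d : ℕ} (M : Matrix (Fin d) (Fin d) ℝ) : Matrix (Fin d) (Fin d) ℝ :=
  if h : M.PosSemidef then
    h.1.eigenvectorUnitary.1 * diagonal ((↑) ∘ (√·) ∘ h.1.eigenvalues) *
      (star h.1.eigenvectorUnitary : Matrix (Fin d) (Fin d) ℝ)
  else 0

/-- Optimal transport map `T_{A→B} = A^{-1/2} (A^{1/2} B A^{1/2})^{1/2} A^{-1/2}`. -/
noncomputable def Tmap {d : ℕ} (A B : Matrix (Fin d) (Fin d) ℝ) : Matrix (Fin d) (Fin d) ℝ :=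
  (msqrt A)⁻¹ * msqrt (msqrt A * B * msqrt A) * (msqrt A)⁻¹

/-- Squared Bures–Wasserstein distance `tr(A + B - 2 (A^{1/2} B A^{1/2})^{1/2})`. -/
noncomputable def W2sq {d : ℕ} (A B : Matrix (Fin d) (Fin d) ℝ) : ℝ :=
  (A + B - (2 : ℝ) • msqrt (msqrt A * B * msqrt A)).trace

/-- Bures–Wasserstein distance. -/
noncomputable def W2 {d : ℕ} (A B : Matrix (Fin d) (Fin d) ℝ) : ℝ :=
  Real.sqrt (W2sq A B)

/-- Smallest eigenvalue of a (hermitian) matrix. -/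
noncomputable def lamMin {d : ℕ} (M : Matrix (Fin d) (Fin d) ℝ) : ℝ :=
  if h : M.IsHermitian then ⨅ i, h.eigenvalues i else 0

/-- Largest eigenvalue of a (hermitian) matrix. -/
noncomputable def lamMax {d : ℕ} (M : Matrix (Fin d) (Fin d) ℝ) : ℝ :=
  if h : M.IsHermitian then ⨆ i, h.eigenvalues i else 0

/-- `Kset a b` : symmetric positive definite matrices with all eigenvalues in `[a, b]`,
expressed via the Loewner order `a • I ⪯ S ⪯ b • I`. -/
def Kset {d : ℕ} (a b : ℝ) : Set (Matrix (Fin d) (Fin d) ℝ) :=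
  {S | S.PosDef ∧ (S - a • (1 : Matrix (Fin d) (Fin d) ℝ)).PosSemidef ∧
    (b • (1 : Matrix (Fin d) (Fin d) ℝ) - S).PosSemidef}

/-- Barycenter functional `F(S) = (1/(2N)) ∑ᵢ W₂²(S, Σᵢ)`. -/
noncomputable def Fbar {d N : ℕ} (Ss : Fin N → Matrix (Fin d) (Fin d) ℝ)
    (S : Matrix (Fin d) (Fin d) ℝ) : ℝ :=
  (1 / (2 * (N : ℝ))) * ∑ i, W2sq S (Ss i)

/-- Bures–Wasserstein gradient of the barycenter functional: `I - (1/N) ∑ᵢ T_{S→Σᵢ}`. -/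
noncomputable def gradF {d N : ℕ} (Ss : Fin N → Matrix (Fin d) (Fin d) ℝ)
    (S : Matrix (Fin d) (Fin d) ℝ) : Matrix (Fin d) (Fin d) ℝ :=
  1 - (N : ℝ)⁻¹ • ∑ i, Tmap S (Ss i)

/-- `‖A‖_S² = tr(A S A)`. -/
noncomputable def normAtSq {d : ℕ} (A S : Matrix (Fin d) (Fin d) ℝ) : ℝ :=
  (A * S * A).trace

section Helpers
variable {d : ℕ}

lemma msqrt_posSemidef {M : Matrix (Fin d) (Fin d) ℝ} (h : M.PosSemidef) :
    (msqrt M).PosSemidef := by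
  rw [msqrt, dif_pos h]
  have hD : (diagonal ((↑) ∘ (√·) ∘ h.1.eigenvalues) : Matrix (Fin d) (Fin d) ℝ).PosSemidef := by
    rw [posSemidef_diagonal_iff]; intro i; simp [Real.sqrt_nonneg]
  have := hD.mul_mul_conjTranspose_same (h.1.eigenvectorUnitary : Matrix (Fin d) (Fin d) ℝ)
  simpa [Matrix.star_eq_conjTranspose] using this

lemma msqrt_mul_self {M : Matrix (Fin d) (Fin d) ℝ} (h : M.PosSemidef) :
    msqrt M * msqrt M = M := by
  rw [msqrt, dif_pos h]
  have hU : star (h.1.eigenvectorUnitary : Matrix (Fin d) (Fin d) ℝ) *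
      (h.1.eigenvectorUnitary : Matrix (Fin d) (Fin d) ℝ) = 1 :=
    Unitary.star_mul_self_of_mem h.1.eigenvectorUnitary.2
  conv_rhs => rw [h.1.spectral_theorem, Unitary.conjStarAlgAut_apply]
  have hdd : diagonal ((↑) ∘ (√·) ∘ h.1.eigenvalues) * diagonal ((↑) ∘ (√·) ∘ h.1.eigenvalues)
      = (diagonal (RCLike.ofReal ∘ h.1.eigenvalues) : Matrix (Fin d) (Fin d) ℝ) := by
    rw [diagonal_mul_diagonal]; congr 1; funext i
    simp [Real.mul_self_sqrt (h.eigenvalues_nonneg i)]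
  simp only [Matrix.mul_assoc]
  rw [← Matrix.mul_assoc (star _) _ _, hU, Matrix.one_mul, ← Matrix.mul_assoc _ _ (star _), hdd]

lemma transpose_dot_mulVec (A : Matrix (Fin d) (Fin d) ℝ) (x y : Fin d → ℝ) :
    (Aᵀ *ᵥ x) ⬝ᵥ y = x ⬝ᵥ (A *ᵥ y) := by
  rw [mulVec_transpose, ← dotProduct_mulVec]

lemma rayleigh_le_lamMax {M : Matrix (Fin d) (Fin d) ℝ} (hM : M.IsHermitian)
    (x : Fin d → ℝ) : x ⬝ᵥ (M *ᵥ x) ≤ lamMax M * (x ⬝ᵥ x) := by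
  have hlam : lamMax M = ⨆ i, hM.eigenvalues i := dif_pos hM
  have hbd : ∀ i, hM.eigenvalues i ≤ lamMax M := by
    rw [hlam]; exact fun i => le_ciSup (Set.Finite.bddAbove (Set.finite_range _)) i
  set U : Matrix (Fin d) (Fin d) ℝ := (hM.eigenvectorUnitary : Matrix (Fin d) (Fin d) ℝ) with hU
  have hUU : U * Uᵀ = 1 := by
    have := (Matrix.mem_unitaryGroup_iff).mp (hM.eigenvectorUnitary).2
    simpa [Matrix.star_eq_conjTranspose, conjTranspose_eq_transpose_of_trivial] using this
  set y := Uᵀ *ᵥ x with hy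
  have hyy : y ⬝ᵥ y = x ⬝ᵥ x := by
    rw [hy, transpose_dot_mulVec, mulVec_mulVec, hUU, one_mulVec]
  have hx : x ⬝ᵥ (M *ᵥ x) = ∑ i, hM.eigenvalues i * (y i * y i) := by
    conv_lhs => rw [hM.spectral_theorem, Unitary.conjStarAlgAut_apply]
    rw [← mulVec_mulVec, ← mulVec_mulVec, Matrix.star_eq_conjTranspose,
      conjTranspose_eq_transpose_of_trivial, ← hy, ← transpose_dot_mulVec]
    simp only [dotProduct, mulVec_diagonal]
    exact Finset.sum_congr rfl fun i _ => by simp [hy]; ring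
  rw [hx, ← hyy]
  calc ∑ i, hM.eigenvalues i * (y i * y i)
      ≤ ∑ i, lamMax M * (y i * y i) :=
        Finset.sum_le_sum fun i _ => mul_le_mul_of_nonneg_right (hbd i) (mul_self_nonneg _)
    _ = lamMax M * (y ⬝ᵥ y) := by rw [dotProduct, Finset.mul_sum]

lemma Tmap_facts {A B : Matrix (Fin d) (Fin d) ℝ} (hA : A.PosDef) (hB : B.PosSemidef) :
    (Tmap A B).IsHermitian ∧ Tmap A B * A * Tmap A B = B := by
  set R := msqrt A with hRdef
  have hR : R.PosSemidef := by
    rw [hRdef]; exact msqrt_posSemidef hA.posSemidef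
  have hRR : R * R = A := by rw [hRdef]; exact msqrt_mul_self hA.posSemidef
  have hK : (R * B * R).PosSemidef := by
    have := hB.mul_mul_conjTranspose_same R
    rwa [hR.1] at this
  set S := msqrt (R * B * R) with hSdef
  have hS : S.PosSemidef := by rw [hSdef]; exact msqrt_posSemidef hK
  have hSS : S * S = R * B * R := by rw [hSdef]; exact msqrt_mul_self hK
  have hdet : R.det ≠ 0 := by
    have h1 : R.det * R.det = A.det := by rw [← det_mul, hRR]
    intro h; rw [h, mul_zero] at h1; exact (ne_of_gt hA.det_pos) h1.symm
  have h4 : R * R⁻¹ = 1 := mul_nonsing_inv _ (isUnit_iff_ne_zero.mpr hdet)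
  have h5 : R⁻¹ * R = 1 := nonsing_inv_mul _ (isUnit_iff_ne_zero.mpr hdet)
  have h1 : ∀ X, R * (R⁻¹ * X) = X := fun X => by rw [← Matrix.mul_assoc, h4, Matrix.one_mul]
  have h2 : ∀ X, R⁻¹ * (R * X) = X := fun X => by rw [← Matrix.mul_assoc, h5, Matrix.one_mul]
  have hT : Tmap A B = R⁻¹ * S * R⁻¹ := rfl
  have hRinv : (R⁻¹).IsHermitian := by
    rw [Matrix.IsHermitian, Matrix.conjTranspose_nonsing_inv, hR.1]
  constructor
  · rw [hT, Matrix.IsHermitian, conjTranspose_mul, conjTranspose_mul, hRinv, hS.1,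
      Matrix.mul_assoc]
  · rw [hT, ← hRR]
    have h3 : ∀ X, S * (S * X) = R * (B * (R * X)) := fun X => by
      rw [← Matrix.mul_assoc, hSS]; simp only [Matrix.mul_assoc]
    simp only [Matrix.mul_assoc, h2, h1, h3, h4, Matrix.mul_one]

lemma exists_unit_eigenvector {M : Matrix (Fin d) (Fin d) ℝ} (hM : M.IsHermitian)
    (hd : 0 < d) : ∃ v : Fin d → ℝ, v ⬝ᵥ v = 1 ∧ M *ᵥ v = lamMax M • v := by
  haveI : Nonempty (Fin d) := Fin.pos_iff_nonempty.mp hd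
  obtain ⟨j, hj⟩ := exists_eq_ciSup_of_finite (f := hM.eigenvalues)
  have hlam : lamMax M = hM.eigenvalues j := by rw [lamMax, dif_pos hM, ← hj]
  refine ⟨⇑(hM.eigenvectorBasis j), ?_, ?_⟩
  · have hn : ‖hM.eigenvectorBasis j‖ = 1 := hM.eigenvectorBasis.orthonormal.1 j
    have h2 := EuclideanSpace.norm_eq (hM.eigenvectorBasis j)
    rw [hn] at h2
    have h3 : (∑ i, ‖(⇑(hM.eigenvectorBasis j) : Fin d → ℝ) i‖ ^ 2) = 1 := by
      rw [← Real.sqrt_eq_one]; exact h2.symm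
    rw [dotProduct, ← h3]
    exact Finset.sum_congr rfl fun i _ => by
      rw [Real.norm_eq_abs, sq_abs, pow_two]
  · rw [hM.mulVec_eigenvectorBasis, hlam]

end Helpers

/-- `√λ_max` is convex along generalized geodesics of the Bures–Wasserstein geometry. -/
theorem sqrt_lamMax_generalized_barycenter {d N : ℕ}
    (S0 : Matrix (Fin d) (Fin d) ℝ) (hS0 : S0.PosDef)
    (Ss : Fin N → Matrix (Fin d) (Fin d) ℝ) (hSs : ∀ i, (Ss i).PosDef)
    (w : Fin N → ℝ) (hw : ∀ i, 0 ≤ w i) (hw1 : ∑ i, w i = 1) :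
    Real.sqrt (lamMax
        ((∑ i, w i • Tmap S0 (Ss i)) * S0 * (∑ i, w i • Tmap S0 (Ss i)))) ≤
      ∑ i, w i * Real.sqrt (lamMax (Ss i)) := by
  have hc0 : 0 ≤ ∑ i, w i * Real.sqrt (lamMax (Ss i)) :=
    Finset.sum_nonneg fun i _ => mul_nonneg (hw i) (Real.sqrt_nonneg _)
  rcases Nat.eq_zero_or_pos d with hd | hd
  · subst hd
    have h0 : ∀ (M : Matrix (Fin 0) (Fin 0) ℝ), lamMax M = 0 := by
      intro M; rw [lamMax]
      split
      · exact Real.iSup_of_isEmpty _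
      · rfl
    rw [h0, Real.sqrt_zero]
    exact hc0
  -- main case
  have hTfacts := fun i => Tmap_facts hS0 (hSs i).posSemidef
  set P := ∑ i, w i • Tmap S0 (Ss i) with hPdef
  have hPH : P.IsHermitian := by
    rw [hPdef, Matrix.IsHermitian, Matrix.conjTranspose_sum]
    exact Finset.sum_congr rfl fun i _ => by
      rw [Matrix.conjTranspose_smul, (hTfacts i).1.eq]; simp
  have hMH : (P * S0 * P).IsHermitian := by
    rw [Matrix.IsHermitian, conjTranspose_mul, conjTranspose_mul, hPH.eq, hS0.1.eq,
      Matrix.mul_assoc]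
  obtain ⟨v, hv1, hveig⟩ := exists_unit_eigenvector hMH hd
  have hlamM : lamMax (P * S0 * P) = v ⬝ᵥ ((P * S0 * P) *ᵥ v) := by
    rw [hveig, dotProduct_smul, hv1, smul_eq_mul, mul_one]
  -- square root of S0
  have hR : (msqrt S0).PosSemidef := by
    exact msqrt_posSemidef hS0.posSemidef
  have hRR : msqrt S0 * msqrt S0 = S0 := by
    exact msqrt_mul_self hS0.posSemidef
  have hRt : (msqrt S0)ᵀ = msqrt S0 := by
    rw [← conjTranspose_eq_transpose_of_trivial, hR.1]
  have hquad : ∀ a : Fin d → ℝ,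
      (msqrt S0 *ᵥ a) ⬝ᵥ (msqrt S0 *ᵥ a) = a ⬝ᵥ (S0 *ᵥ a) := by
    intro a
    conv_lhs => rw [← hRt]
    rw [transpose_dot_mulVec, mulVec_mulVec, hRt, hRR]
  have hPt : Pᵀ = P := by rw [← conjTranspose_eq_transpose_of_trivial, hPH.eq]
  set z := msqrt S0 *ᵥ (P *ᵥ v) with hzdef
  have hzz : z ⬝ᵥ z = v ⬝ᵥ ((P * S0 * P) *ᵥ v) := by
    have h1 : v ⬝ᵥ ((P * S0 * P) *ᵥ v) = (P *ᵥ v) ⬝ᵥ (S0 *ᵥ (P *ᵥ v)) := by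
      rw [← Matrix.mulVec_mulVec, ← Matrix.mulVec_mulVec, ← transpose_dot_mulVec P, hPt]
    rw [hzdef, hquad, ← h1]
  -- Euclidean space
  set L := (WithLp.linearEquiv 2 ℝ (Fin d → ℝ)) with hLdef
  have hnorm : ∀ y : Fin d → ℝ,
      ‖(L.symm y : EuclideanSpace ℝ (Fin d))‖ ^ 2 = y ⬝ᵥ y := by
    intro y
    rw [EuclideanSpace.norm_eq, Real.sq_sqrt (Finset.sum_nonneg fun i _ => sq_nonneg _)]
    exact Finset.sum_congr rfl fun i _ => by
      rw [Real.norm_eq_abs, sq_abs, pow_two]; rfl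
  set u : Fin N → EuclideanSpace ℝ (Fin d) :=
    fun i => L.symm (msqrt S0 *ᵥ (Tmap S0 (Ss i) *ᵥ v)) with hudef
  have hz2 : z = ∑ i, w i • (msqrt S0 *ᵥ (Tmap S0 (Ss i) *ᵥ v)) := by
    have h1 : P *ᵥ v = ∑ i, w i • (Tmap S0 (Ss i) *ᵥ v) := by
      rw [hPdef]
      induction (Finset.univ : Finset (Fin N)) using Finset.induction with
      | empty => simp
      | insert _ _ h ih =>
          rw [Finset.sum_insert h, Finset.sum_insert h, Matrix.add_mulVec, ih,
            smul_mulVec]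
    rw [hzdef, h1, ← Matrix.mulVecLin_apply, map_sum]
    exact Finset.sum_congr rfl fun i _ => by
      rw [_root_.map_smul, Matrix.mulVecLin_apply]
  have hsum : (L.symm z : EuclideanSpace ℝ (Fin d)) = ∑ i, w i • u i := by
    rw [hz2, map_sum]
    exact Finset.sum_congr rfl fun i _ => by rw [_root_.map_smul]
  have hui : ∀ i, ‖u i‖ ≤ Real.sqrt (lamMax (Ss i)) := by
    intro i
    have h1 : ‖u i‖ ^ 2 = v ⬝ᵥ (Ss i *ᵥ v) := by
      rw [hudef]
      have hTt : (Tmap S0 (Ss i))ᵀ = Tmap S0 (Ss i) := by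
        rw [← conjTranspose_eq_transpose_of_trivial, (hTfacts i).1.eq]
      rw [hnorm, hquad]
      conv_lhs => rw [← hTt]
      rw [transpose_dot_mulVec, mulVec_mulVec, mulVec_mulVec, hTt, (hTfacts i).2]
    have h2 : v ⬝ᵥ (Ss i *ᵥ v) ≤ lamMax (Ss i) := by
      have := rayleigh_le_lamMax (hSs i).1 v
      rwa [hv1, mul_one] at this
    calc ‖u i‖ = Real.sqrt (‖u i‖ ^ 2) := (Real.sqrt_sq (norm_nonneg _)).symm
      _ ≤ Real.sqrt (lamMax (Ss i)) := Real.sqrt_le_sqrt (h1 ▸ h2)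
  have hfin : ‖(L.symm z : EuclideanSpace ℝ (Fin d))‖ ≤ ∑ i, w i * Real.sqrt (lamMax (Ss i)) := by
    rw [hsum]
    calc ‖∑ i, w i • u i‖ ≤ ∑ i, ‖w i • u i‖ := norm_sum_le _ _
      _ = ∑ i, w i * ‖u i‖ := Finset.sum_congr rfl fun i _ => by
          rw [norm_smul, Real.norm_eq_abs, abs_of_nonneg (hw i)]
      _ ≤ ∑ i, w i * Real.sqrt (lamMax (Ss i)) :=
          Finset.sum_le_sum fun i _ => mul_le_mul_of_nonneg_left (hui i) (hw i)
  have hkey : lamMax (P * S0 * P) = ‖(L.symm z : EuclideanSpace ℝ (Fin d))‖ ^ 2 := by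
    rw [hnorm, hzz, hlamM]
  rw [hkey, Real.sqrt_sq (norm_nonneg _)]
  exact hfin
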